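/- The set ISB of infinite shift-bounded binary sequences, identified with a subset of [0,1] via binary expansion, has Lebesgue measure zero. -/

import Mathlib

open Filter MeasureTheory

/-- Left shift by `k` on infinite binary sequences. -/
def shiftSeq (k : ℕ) (x : ℕ → Bool) : ℕ → Bool := fun n => x (n + k)

/-- Strict lexicographic order on infinite binary sequences (`false < true`). -/
def seqLt (a b : ℕ → Bool) : Prop :=
  ∃ n, (∀ k < n, a k = b k) ∧ a n = false ∧ b n = true

def seqLe (a b : ℕ → Bool) : Prop := a = b ∨ seqLt a b

/-- A finite word viewed as an infinite sequence (padded with zeros). -/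
def wordSeq (w : List Bool) : ℕ → Bool := fun n => w.getD n false

/-- Bitwise complement of an infinite sequence. -/
def complSeq (a : ℕ → Bool) : ℕ → Bool := fun n => ! a n

/-- `F(c) = {x : c' ≥ σⁿ(x) ≥ c for all n ≥ 0}` for an infinite bound `c`. -/
def Fset (c : ℕ → Bool) : Set (ℕ → Bool) :=
  {x | ∀ n : ℕ, seqLe c (shiftSeq n x) ∧ seqLe (shiftSeq n x) (complSeq c)}

/-- The real number in `[0,1]` with binary expansion `x`. -/
noncomputable def seqVal (x : ℕ → Bool) : ℝ :=
  ∑' n : ℕ, (cond (x n) (1 : ℝ) 0) / 2 ^ (n + 1)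

/-- The periodic infinite sequence `w^∞`. -/
def perSeq (w : List Bool) : ℕ → Bool := fun n => w.getD (n % w.length) false

/-- `s̃`: the word `s` with its last symbol inverted. -/
def flipLast (s : List Bool) : List Bool :=
  s.dropLast ++ [! s.getD (s.length - 1) false]

/-- `f(s) = s̃ s'` where `s'` is the bitwise complement of `s`. -/
def fW (s : List Bool) : List Bool := flipLast s ++ s.map (fun b => !b)

/-- A finite word `s` is shift-bounded: `s' > σⁿ(s) > s` for `0 < n < |s|`,
comparisons via the embedding of finite words into infinite sequences
(`s` padded with zeros, `s'` is the complement of the padded sequence);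
by convention `[false]` is excluded. -/
def ShiftBounded (s : List Bool) : Prop :=
  s ≠ [false] ∧ ∀ n, 0 < n → n < s.length →
    seqLt (wordSeq s) (wordSeq (s.drop n)) ∧
    seqLt (wordSeq (s.drop n)) (complSeq (wordSeq s))

/-- Prepend a finite word to an infinite sequence. -/
def appendSeq (w : List Bool) (t : ℕ → Bool) : ℕ → Bool :=
  fun n => if n < w.length then w.getD n false else t (n - w.length)

/-- `w^k`: the word `w` repeated `k` times. -/
def repWord (k : ℕ) (w : List Bool) : List Bool :=
  (List.replicate k w).foldr (· ++ ·) []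

/-- The infinite concatenation of the finite words `g 0, g 1, g 2, …`
(assuming all are nonempty, the `n`-th symbol is obtained from the first
`n+1` blocks). -/
def concatSeq (g : ℕ → List Bool) : ℕ → Bool :=
  fun n => (((List.range (n + 1)).map g).foldr (· ++ ·) []).getD n false

/- ### Auxiliary material for stmt14 -/
open scoped ENNReal Pointwise

/-- Sequences that have a `true` in every block of length `m` at block positions. -/
def Aset (m : ℕ) : Set (ℕ → Bool) := {x | ∀ k : ℕ, ∃ i < m, x (k * m + i) = true}

lemma seqLt_asymm {a b : ℕ → Bool} (h1 : seqLt a b) (h2 : seqLt b a) : False := by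
  obtain ⟨n1, hpre1, ha1, hb1⟩ := h1
  obtain ⟨n2, hpre2, hb2, ha2⟩ := h2
  rcases lt_trichotomy n1 n2 with h | h | h
  · have := hpre2 n1 h; rw [hb1, ha1] at this; exact Bool.noConfusion this
  · subst h; rw [ha1] at ha2; exact Bool.noConfusion ha2
  · have := hpre1 n2 h; rw [ha2, hb2] at this; exact Bool.noConfusion this

lemma summable_seqVal (x : ℕ → Bool) :
    Summable (fun n : ℕ => (cond (x n) (1 : ℝ) 0) / 2 ^ (n + 1)) := by
  have hgeo : Summable (fun n : ℕ => (1/2 : ℝ) ^ (n + 1)) :=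
    (summable_nat_add_iff 1).2
      (summable_geometric_of_lt_one (by norm_num) (by norm_num))
  refine Summable.of_nonneg_of_le (fun n => ?_) (fun n => ?_) hgeo
  · cases x n <;> simp
  · rw [div_pow, one_pow]
    gcongr
    cases x n <;> simp
lemma seqVal_nonneg (x : ℕ → Bool) : 0 ≤ seqVal x := by
  refine tsum_nonneg fun n => ?_
  cases x n <;> simp

lemma seqVal_le_one (x : ℕ → Bool) : seqVal x ≤ 1 := by
  have hgeo : Summable fun n : ℕ => (1:ℝ)/2/2^n := by
    refine ((summable_geometric_of_lt_one (r := (1/2:ℝ)) (by norm_num) (by norm_num)).div_const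
      2).congr fun n => ?_
    rw [div_pow, one_pow, div_div, div_div, mul_comm]
  rw [seqVal]
  calc ∑' n : ℕ, (cond (x n) (1 : ℝ) 0) / 2 ^ (n + 1)
      ≤ ∑' n : ℕ, (1:ℝ) / 2 / 2 ^ n := by
        refine Summable.tsum_le_tsum (fun n => ?_) (summable_seqVal x) hgeo
        rw [div_div, ← pow_succ']
        gcongr
        cases x n <;> simp
    _ = 1 := tsum_geometric_two' 1

lemma seqVal_split (m : ℕ) (x : ℕ → Bool) :
    seqVal x = (∑ i ∈ Finset.range m, (cond (x i) (1 : ℝ) 0) / 2 ^ (i + 1))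
      + ((2:ℝ) ^ m)⁻¹ * seqVal (shiftSeq m x) := by
  have hs := summable_seqVal x
  have h := Summable.sum_add_tsum_nat_add (f := fun n : ℕ => (cond (x n) (1 : ℝ) 0) / 2 ^ (n + 1)) m hs
  rw [seqVal, ← h]
  congr 1
  have key : ∀ i : ℕ, (cond (x (i + m)) (1 : ℝ) 0) / 2 ^ (i + m + 1)
      = ((2:ℝ)^m)⁻¹ * ((cond (shiftSeq m x i) (1 : ℝ) 0) / 2 ^ (i + 1)) := by
    intro i
    simp only [shiftSeq]
    rw [show i + m + 1 = m + (i + 1) by ring, pow_add]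
    field_simp
  rw [tsum_congr key, tsum_mul_left, seqVal]

lemma shift_mem_Aset {m : ℕ} {x : ℕ → Bool} (hx : x ∈ Aset m) : shiftSeq m x ∈ Aset m := by
  intro k
  obtain ⟨i, hi, h⟩ := hx (k + 1)
  exact ⟨i, hi, by simpa [shiftSeq, show k * m + i + m = (k+1) * m + i by ring] using h⟩

lemma vol_Aset (m : ℕ) (hm : 0 < m) : volume (seqVal '' Aset m) = 0 := by
  classical
  set E := seqVal '' Aset m with hE
  set q : ℝ≥0∞ := ENNReal.ofReal ((2:ℝ)^m)⁻¹ with hq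
  have hq0 : q ≠ 0 := (ENNReal.ofReal_pos.2 (by positivity)).ne'
  have hqt : q ≠ ⊤ := ENNReal.ofReal_ne_top
  have hE1 : volume E ≤ 1 := by
    have hsub : E ⊆ Set.Icc (0:ℝ) 1 := by
      rintro _ ⟨x, -, rfl⟩; exact ⟨seqVal_nonneg x, seqVal_le_one x⟩
    calc volume E ≤ volume (Set.Icc (0:ℝ) 1) := measure_mono hsub
      _ = 1 := by simp [Real.volume_Icc]
  have hvt : volume E ≠ ⊤ := (lt_of_le_of_lt hE1 ENNReal.one_lt_top).ne
  -- self-similarity inclusion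
  have key : E ⊆ ⋃ b ∈ (Finset.univ.erase (fun _ => false) : Finset (Fin m → Bool)),
      ((∑ i : Fin m, (cond (b i) (1:ℝ) 0) / 2 ^ ((i:ℕ)+1)) +ᵥ (((2:ℝ)^m)⁻¹ • E)) := by
    rintro _ ⟨x, hx, rfl⟩
    refine Set.mem_iUnion₂.2 ⟨fun i => x i, ?_, ?_⟩
    · refine Finset.mem_erase.2 ⟨?_, Finset.mem_univ _⟩
      obtain ⟨i, hi, hxi⟩ := hx 0
      intro hb
      have := congrFun hb ⟨i, hi⟩
      simp only at this
      rw [Nat.zero_mul, Nat.zero_add] at hxi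
      rw [this] at hxi; exact Bool.noConfusion hxi
    · refine Set.mem_vadd_set.2 ⟨((2:ℝ)^m)⁻¹ * seqVal (shiftSeq m x), ?_, ?_⟩
      · have : seqVal (shiftSeq m x) ∈ E := ⟨shiftSeq m x, shift_mem_Aset hx, rfl⟩
        simpa [smul_eq_mul] using Set.smul_mem_smul_set (a := ((2:ℝ)^m)⁻¹) this
      · have hsplit := seqVal_split m x
        have hsum : (∑ i : Fin m, (cond (x i) (1:ℝ) 0) / 2 ^ ((i:ℕ)+1))
            = ∑ i ∈ Finset.range m, (cond (x i) (1 : ℝ) 0) / 2 ^ (i + 1) :=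
          Fin.sum_univ_eq_sum_range (fun i => (cond (x i) (1:ℝ) 0) / 2 ^ (i+1)) m
        rw [vadd_eq_add, hsum]
        linarith [hsplit]
  have hvol : ∀ b : Fin m → Bool,
      volume ((∑ i : Fin m, (cond (b i) (1:ℝ) 0) / 2 ^ ((i:ℕ)+1)) +ᵥ (((2:ℝ)^m)⁻¹ • E))
        = q * volume E := by
    intro b
    rw [measure_vadd, Measure.addHaar_smul, Module.finrank_self, pow_one,
      abs_of_pos (by positivity)]
  have hcard : (Finset.univ.erase (fun _ => false) : Finset (Fin m → Bool)).card = 2 ^ m - 1 := by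
    rw [Finset.card_erase_of_mem (Finset.mem_univ _), Finset.card_univ, Fintype.card_fun]
    simp
  have hmain : volume E ≤ ((2 ^ m - 1 : ℕ) : ℝ≥0∞) * (q * volume E) := by
    calc volume E ≤ volume (⋃ b ∈ (Finset.univ.erase (fun _ => false) : Finset (Fin m → Bool)),
          ((∑ i : Fin m, (cond (b i) (1:ℝ) 0) / 2 ^ ((i:ℕ)+1)) +ᵥ (((2:ℝ)^m)⁻¹ • E))) :=
        measure_mono key
      _ ≤ ∑ b ∈ (Finset.univ.erase (fun _ => false) : Finset (Fin m → Bool)),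
          volume ((∑ i : Fin m, (cond (b i) (1:ℝ) 0) / 2 ^ ((i:ℕ)+1)) +ᵥ (((2:ℝ)^m)⁻¹ • E)) :=
        measure_biUnion_finset_le _ _
      _ = ((2 ^ m - 1 : ℕ) : ℝ≥0∞) * (q * volume E) := by
        rw [Finset.sum_congr rfl (fun b _ => hvol b), Finset.sum_const, hcard, nsmul_eq_mul]
  have hlt1 : ((2 ^ m - 1 : ℕ) : ℝ≥0∞) * q < 1 := by
    have h2 : ((2 ^ m : ℕ) : ℝ≥0∞) * q = 1 := by
      rw [hq, ← ENNReal.ofReal_natCast, ← ENNReal.ofReal_mul (by positivity)]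
      rw [Nat.cast_pow, Nat.cast_ofNat, mul_inv_cancel₀ (by positivity), ENNReal.ofReal_one]
    have hlt : ((2 ^ m - 1 : ℕ) : ℝ≥0∞) < ((2 ^ m : ℕ) : ℝ≥0∞) := by
      exact_mod_cast Nat.sub_lt (Nat.pow_pos (n := m) (by norm_num)) one_pos
    calc ((2 ^ m - 1 : ℕ) : ℝ≥0∞) * q < ((2 ^ m : ℕ) : ℝ≥0∞) * q :=
        ENNReal.mul_lt_mul_left hq0 hqt hlt
      _ = 1 := h2
  by_contra hne
  have hlt2 : ((2 ^ m - 1 : ℕ) : ℝ≥0∞) * q * volume E < volume E := by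
    have := ENNReal.mul_lt_mul_left hne hvt hlt1
    simpa using this
  rw [← mul_assoc] at hmain
  exact absurd (lt_of_le_of_lt hmain hlt2) (lt_irrefl _)

theorem stmt14 :
    volume (seqVal ''
      {s : ℕ → Bool | ∀ n, 0 < n →
        seqLt s (shiftSeq n s) ∧ seqLt (shiftSeq n s) (complSeq s)}) = 0 := by
  classical
  set S := {s : ℕ → Bool | ∀ n, 0 < n →
      seqLt s (shiftSeq n s) ∧ seqLt (shiftSeq n s) (complSeq s)} with hS
  have hsub : S ⊆ ⋃ m : ℕ, Aset (m + 1) := by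
    intro s hs
    obtain ⟨n, -, -, hn⟩ := (hs 1 one_pos).1
    have hex : ∃ k, s k = true := ⟨n + 1, by simpa [shiftSeq] using hn⟩
    refine Set.mem_iUnion.2 ⟨Nat.find hex, ?_⟩
    intro k
    set a := Nat.find hex with ha
    by_cases hk : k = 0
    · subst hk
      exact ⟨a, Nat.lt_succ_self a, by simpa using Nat.find_spec hex⟩
    · by_contra hcon
      push_neg at hcon
      set n0 := k * (a + 1) with hn0def
      have hn0 : 0 < n0 := Nat.mul_pos (Nat.pos_of_ne_zero hk) (Nat.succ_pos a)
      have hlt1 := (hs n0 hn0).1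
      have hcon' : ∀ i < a + 1, s (n0 + i) = false := by
        intro i hi
        have := hcon i hi
        rw [Nat.add_comm n0 i]
        rw [show i + n0 = k * (a+1) + i by rw [hn0def]; ring] at *
        simpa using hcon i hi
      have hlt2 : seqLt (shiftSeq n0 s) s := by
        refine ⟨a, ?_, ?_, Nat.find_spec hex⟩
        · intro j hj
          have h1 : s j = false := by
            have := Nat.find_min hex hj
            simpa using this
          have h2 : shiftSeq n0 s j = false := by
            have := hcon' j (lt_trans hj (Nat.lt_succ_self a))
            simpa [shiftSeq, Nat.add_comm] using this
          rw [h1, h2]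
        · have := hcon' a (Nat.lt_succ_self a)
          simpa [shiftSeq, Nat.add_comm] using this
      exact seqLt_asymm hlt1 hlt2
  have himg : seqVal '' S ⊆ ⋃ m : ℕ, seqVal '' Aset (m + 1) := by
    rw [← Set.image_iUnion]
    exact Set.image_mono hsub
  exact measure_mono_null himg
    (measure_iUnion_null fun m => vol_Aset (m + 1) (Nat.succ_pos m))
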